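/- If γ is a Hermitian metric of dimension n with ∂γ^{n−1} E_r-exact for some r ≥ 1, then ∂γ^{n−1} is already E_3-exact. More precisely, in bidegree (n, n−1), the tower of E_r-exactness conditions reduces to: ∂γ^{n−1} = ∂̄Γ + ∂ζ with ∂̄ζ = ∂v and ∂̄v = 0 for some forms Γ of type (n, n−2), ζ of type (n−1,n−1), v of type (n−2, n). -/
import Mathlib


/-- If `γ` is a Hermitian metric on an `n`-dimensional compact complex
manifold with `∂γ^{n−1}` `E_r`-exact for some `r ≥ 1`, then `∂γ^{n−1}` is already
`E_3`-exact: there exist `Γ ∈ 𝒜 (n, n−2)`, `ζ ∈ 𝒜 (n−1, n−1)`, `v ∈ 𝒜 (n−2, n)` with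
`∂γ^{n−1} = ∂̄Γ + ∂ζ`, `∂̄ζ = ∂v`, `∂̄v = 0`.
Forms are modelled by a ℂ-module bigraded by `𝒜 : ℤ × ℤ → Submodule ℂ Ω`, with pieces of
bidegree exceeding `n` in either index vanishing; `g` stands for `γ^{n−1} ∈ 𝒜 (n−1,n−1)`;
the typed `E_r`-exactness hypothesis is spelled out as in the paper. -/
theorem ErsG_reduces_to_E3sG
    {Ω : Type*} [AddCommGroup Ω] [Module ℂ Ω]
    (n : ℤ)
    (𝒜 : ℤ × ℤ → Submodule ℂ Ω)
    (htop : ∀ p q : ℤ, (n < p ∨ n < q) → 𝒜 (p, q) = ⊥)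
    (del delbar : Ω →ₗ[ℂ] Ω)
    (hdel : ∀ (p q : ℤ) (x : Ω), x ∈ 𝒜 (p, q) → del x ∈ 𝒜 (p + 1, q))
    (hdelbar : ∀ (p q : ℤ) (x : Ω), x ∈ 𝒜 (p, q) → delbar x ∈ 𝒜 (p, q + 1))
    (g : Ω) (hg : g ∈ 𝒜 (n - 1, n - 1))
    (r : ℕ) (hr : 1 ≤ r)
    (hex : ∃ (ζ ξ : Ω) (v : ℤ → Ω),
        ζ ∈ 𝒜 (n - 1, n - 1) ∧ ξ ∈ 𝒜 (n, n - 2) ∧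
        (∀ l : ℤ, v l ∈ 𝒜 (n - (r : ℤ) + 1 + l, (n - 1) + (r : ℤ) - 2 - l)) ∧
        (∀ l : ℤ, l < 0 → v l = 0) ∧
        del g = del ζ + delbar ξ ∧
        (r = 1 → ζ = 0) ∧
        delbar ζ = del (v ((r : ℤ) - 3)) ∧
        (∀ j : ℤ, 1 ≤ j → j ≤ (r : ℤ) - 3 → delbar (v j) = del (v (j - 1))) ∧
        delbar (v 0) = 0) :
    ∃ Γ ζ v : Ω,
      Γ ∈ 𝒜 (n, n - 2) ∧ ζ ∈ 𝒜 (n - 1, n - 1) ∧ v ∈ 𝒜 (n - 2, n) ∧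
      del g = delbar Γ + del ζ ∧ delbar ζ = del v ∧ delbar v = 0 := by
  obtain ⟨ζ, ξ, v, hζ, hξ, hv, hvneg, hdg, hr1, hdbζ, hvj, hv0⟩ := hex
  refine ⟨ξ, ζ, v ((r : ℤ) - 3), hξ, hζ, ?_, ?_, hdbζ, ?_⟩
  · have := hv ((r : ℤ) - 3)
    convert this using 2 <;> ring
  · rw [hdg]; abel
  · have hmem : v ((r : ℤ) - 3) ∈ 𝒜 (n - 2, n) := by
      have := hv ((r : ℤ) - 3)
      convert this using 2 <;> ring
    have h2 : delbar (v ((r : ℤ) - 3)) ∈ 𝒜 (n - 2, n + 1) := hdelbar _ _ _ hmem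
    have hbot : 𝒜 (n - 2, n + 1) = ⊥ := htop _ _ (Or.inr (by linarith))
    rw [hbot] at h2
    simpa using h2
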